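/- Perron's theorem (uniqueness up to scaling): Let A be an n×n matrix of real numbers all of whose entries are strictly positive, and suppose v, w ∈ ℝⁿ are vectors, each with all entries nonnegative and not all zero, satisfying A·v = r·v and A·w = s·w for real numbers r, s. Then r = s and w is a scalar multiple of v. -/
import Mathlib

lemma perron_mulVec_pos {n : ℕ} (A : Matrix (Fin n) (Fin n) ℝ)
    (hA : ∀ i j, 0 < A i j) (x : Fin n → ℝ) (hx : ∀ i, 0 ≤ x i)
    (hxne : ∃ j, 0 < x j) (i : Fin n) : 0 < A.mulVec x i := by
  obtain ⟨j, hj⟩ := hxne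
  have h1 : 0 < A i j * x j := mul_pos (hA i j) hj
  have h2 : A i j * x j ≤ ∑ k, A i k * x k :=
    Finset.single_le_sum (fun k _ => mul_nonneg (hA i k).le (hx k)) (Finset.mem_univ j)
  have h3 : A.mulVec x i = ∑ k, A i k * x k := by
    simp [Matrix.mulVec, dotProduct]
  linarith

lemma perron_pos {n : ℕ} (A : Matrix (Fin n) (Fin n) ℝ)
    (hA : ∀ i j, 0 < A i j) (v : Fin n → ℝ) (r : ℝ)
    (hv0 : ∀ i, 0 ≤ v i) (hvne : v ≠ 0) (hAv : A.mulVec v = r • v) :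
    (∀ i, 0 < v i) ∧ 0 < r := by
  have hex : ∃ j, 0 < v j := by
    by_contra h; push_neg at h
    exact hvne (funext fun i => le_antisymm (h i) (hv0 i))
  have hvpos : ∀ i, 0 < v i := by
    intro i
    have h1 : 0 < r * v i := by
      have := perron_mulVec_pos A hA v hv0 hex i
      rwa [hAv] at this
    rcases (hv0 i).lt_or_eq with h | h
    · exact h
    · rw [← h, mul_zero] at h1; exact absurd h1 (lt_irrefl 0)
  obtain ⟨j, hj⟩ := hex
  have h1 : 0 < r * v j := by
    have := perron_mulVec_pos A hA v hv0 ⟨j, hj⟩ j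
    rwa [hAv] at this
  refine ⟨hvpos, ?_⟩
  nlinarith [hvpos j]

lemma perron_main {n : ℕ} (hn : Nonempty (Fin n)) (A : Matrix (Fin n) (Fin n) ℝ)
    (hA : ∀ i j, 0 < A i j) (v w : Fin n → ℝ) (r s : ℝ)
    (hv : ∀ i, 0 < v i) (hw : ∀ i, 0 < w i)
    (hAv : A.mulVec v = r • v) (hAw : A.mulVec w = s • w) :
    r ≤ s ∧ (r = s → ∃ c : ℝ, w = c • v) := by
  have hU : (Finset.univ : Finset (Fin n)).Nonempty := Finset.univ_nonempty
  set c := Finset.univ.inf' hU (fun i => w i / v i) with hc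
  obtain ⟨i0, -, hi0⟩ := Finset.exists_mem_eq_inf' hU (fun i => w i / v i)
  have hcle : ∀ j, c * v j ≤ w j := fun j =>
    (le_div_iff₀ (hv j)).mp (Finset.inf'_le _ (Finset.mem_univ j))
  have hci0 : c * v i0 = w i0 := by
    rw [hc, hi0]; exact div_mul_cancel₀ (w i0) (hv i0).ne'
  have hcpos : 0 < c := by
    rw [hc, hi0]; exact div_pos (hw i0) (hv i0)
  have hu0 : ∀ j, 0 ≤ (w - c • v) j := by
    intro j
    simp only [Pi.sub_apply, Pi.smul_apply, smul_eq_mul]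
    linarith [hcle j]
  have hAu : A.mulVec (w - c • v) i0 = c * v i0 * (s - r) := by
    rw [Matrix.mulVec_sub, Matrix.mulVec_smul, hAv, hAw]
    simp only [Pi.sub_apply, Pi.smul_apply, smul_eq_mul]
    rw [← hci0]; ring
  have hsum_nonneg : 0 ≤ A.mulVec (w - c • v) i0 := by
    have h3 : A.mulVec (w - c • v) i0 = ∑ k, A i0 k * (w - c • v) k := by
      simp [Matrix.mulVec, dotProduct]
    rw [h3]
    exact Finset.sum_nonneg fun k _ => mul_nonneg (hA i0 k).le (hu0 k)
  have hrs : r ≤ s := by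
    rw [hAu] at hsum_nonneg
    nlinarith [mul_pos hcpos (hv i0)]
  refine ⟨hrs, fun hrseq => ⟨c, ?_⟩⟩
  have huz : ∀ j, (w - c • v) j = 0 := by
    by_contra h
    push_neg at h
    obtain ⟨j, hj⟩ := h
    have hjpos : 0 < (w - c • v) j := lt_of_le_of_ne (hu0 j) (Ne.symm hj)
    have hpos := perron_mulVec_pos A hA (w - c • v) hu0 ⟨j, hjpos⟩ i0
    rw [hAu, ← hrseq] at hpos
    simp at hpos
  funext j
  have := huz j
  simp only [Pi.sub_apply, Pi.smul_apply, smul_eq_mul] at this ⊢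
  linarith

/-- Perron's theorem (uniqueness up to scaling): any two nonnegative nonzero
eigenvectors of a strictly positive real matrix have the same eigenvalue and
are scalar multiples of each other. -/
theorem perron_uniqueness (n : ℕ) (A : Matrix (Fin n) (Fin n) ℝ)
    (hA : ∀ i j, 0 < A i j) (v w : Fin n → ℝ) (r s : ℝ)
    (hv0 : ∀ i, 0 ≤ v i) (hvne : v ≠ 0)
    (hw0 : ∀ i, 0 ≤ w i) (hwne : w ≠ 0)
    (hAv : A.mulVec v = r • v) (hAw : A.mulVec w = s • w) :
    r = s ∧ ∃ c : ℝ, w = c • v := by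
  obtain ⟨hv, hr⟩ := perron_pos A hA v r hv0 hvne hAv
  obtain ⟨hw, hs⟩ := perron_pos A hA w s hw0 hwne hAw
  have hn : Nonempty (Fin n) := by
    by_contra h
    exact hvne (funext fun i => absurd ⟨i⟩ h)
  obtain ⟨h1, h2⟩ := perron_main hn A hA v w r s hv hw hAv hAw
  obtain ⟨h3, -⟩ := perron_main hn A hA w v s r hw hv hAw hAv
  have heq : r = s := le_antisymm h1 h3
  exact ⟨heq, h2 heq⟩
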